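/- arXiv:2403.08794 — 3 statements merged into one kernel-verified Lean document; each statement's English description precedes it below -/
import Mathlib

section
/- Let V be a Euclidean vector space of dimension m+1 and let μ be a Borel probability measure on the space H* of affine hyperplanes in V. Suppose (e,x) ∈ S(V) × ℝ (with S(V) the unit sphere of V) satisfies μ{[f,y] ∈ H* : y·f(e) ≥ x·f(e)²} = 1/2 − 3δ, where δ > 0. Then there is an open neighbourhood N of (e,x) in S(V) × ℝ such that μ{[f,y] ∈ H* : y·f(e') ≥ x'·f(e')²} < 1/2 − δ for all (e',x') ∈ N. -/
open MeasureTheory ENNReal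

/-- The equivalence relation on pairs `(f, y)`, with `f` a nonzero (continuous) linear form
on `V` and `y : ℝ`, identifying `(f, y)` with `(t • f, t * y)` for `t ≠ 0`.  The quotient is
the space `H*` of affine hyperplanes `{v | f v = y}` in `V`. -/
def hypSetoid (V : Type*) [NormedAddCommGroup V] [NormedSpace ℝ V] :
    Setoid ({f : V →L[ℝ] ℝ // f ≠ 0} × ℝ) where
  r p q := ∃ t : ℝ, t ≠ 0 ∧ (q.1 : V →L[ℝ] ℝ) = t • (p.1 : V →L[ℝ] ℝ) ∧ q.2 = t * p.2
  iseqv := by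
    constructor
    · intro p
      exact ⟨1, one_ne_zero, (one_smul ℝ _).symm, (one_mul _).symm⟩
    · rintro p q ⟨t, ht, h1, h2⟩
      exact ⟨t⁻¹, inv_ne_zero ht,
        by rw [h1, smul_smul, inv_mul_cancel₀ ht, one_smul],
        by rw [h2, ← mul_assoc, inv_mul_cancel₀ ht, one_mul]⟩
    · rintro p q r ⟨t, ht, h1, h2⟩ ⟨u, hu, h3, h4⟩
      exact ⟨u * t, mul_ne_zero hu ht,
        by rw [h3, h1, smul_smul], by rw [h4, h2, mul_assoc]⟩

/-- The space `H*` of affine hyperplanes in `V`. -/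
def HypSpace (V : Type*) [NormedAddCommGroup V] [NormedSpace ℝ V] :=
  Quotient (hypSetoid V)

/-- `H*` carries the quotient topology. -/
noncomputable instance (V : Type*) [NormedAddCommGroup V] [NormedSpace ℝ V] :
    TopologicalSpace (HypSpace V) :=
  instTopologicalSpaceQuotient

/-- `H*` carries the Borel σ-algebra of the quotient topology. -/
noncomputable instance (V : Type*) [NormedAddCommGroup V] [NormedSpace ℝ V] :
    MeasurableSpace (HypSpace V) :=
  borel _

/-- The affine hyperplane `[f, y] = {v | f v = y}` as a point of `H*`. -/
def hypMk {V : Type*} [NormedAddCommGroup V] [NormedSpace ℝ V]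
    (f : V →L[ℝ] ℝ) (hf : f ≠ 0) (y : ℝ) : HypSpace V :=
  Quotient.mk (hypSetoid V) (⟨f, hf⟩, y)

section HypPhiAux

variable {V : Type*} [NormedAddCommGroup V] [NormedSpace ℝ V]

/-- `H*` is a Borel space (by definition of its σ-algebra). -/
instance : BorelSpace (HypSpace V) := ⟨rfl⟩

/-- The normalized defect `(y f(e) - x f(e)^2) / (‖f‖² + y²)`, on representatives. -/
noncomputable def hypPhiAux (e : V) (x : ℝ) (p : {f : V →L[ℝ] ℝ // f ≠ 0} × ℝ) : ℝ :=
  (p.2 * p.1.1 e - x * (p.1.1 e) ^ 2) / (‖(p.1.1 : V →L[ℝ] ℝ)‖ ^ 2 + p.2 ^ 2)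

lemma hypPhiAux_respects (e : V) (x : ℝ) :
    ∀ p q : {f : V →L[ℝ] ℝ // f ≠ 0} × ℝ, (hypSetoid V).r p q →
      hypPhiAux e x p = hypPhiAux e x q := by
  rintro ⟨⟨f, hf⟩, y⟩ ⟨⟨g, hg⟩, z⟩ ⟨t, ht, h1, h2⟩
  simp only at h1 h2
  subst h1 h2
  have ht2 : (t ^ 2 : ℝ) ≠ 0 := pow_ne_zero 2 ht
  unfold hypPhiAux
  simp only [ContinuousLinearMap.smul_apply, smul_eq_mul]
  have hns : ‖t • f‖ = |t| * ‖f‖ := by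
    have hh := norm_smul t f
    rwa [Real.norm_eq_abs] at hh
  have hden : ‖t • f‖ ^ 2 + (t * y) ^ 2 = t ^ 2 * (‖f‖ ^ 2 + y ^ 2) := by
    rw [hns, mul_pow, sq_abs]; ring
  have hnum : t * y * (t * f e) - x * (t * f e) ^ 2 =
      t ^ 2 * (y * f e - x * (f e) ^ 2) := by ring
  rw [hden, hnum, mul_div_mul_left _ _ ht2]

/-- The normalized defect as a function on `H*`. -/
noncomputable def hypPhi (e : V) (x : ℝ) : HypSpace V → ℝ :=
  Quotient.lift (hypPhiAux e x) (hypPhiAux_respects e x)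

lemma hypDen_pos (f : V →L[ℝ] ℝ) (hf : f ≠ 0) (y : ℝ) : 0 < ‖f‖ ^ 2 + y ^ 2 := by
  have : 0 < ‖f‖ := norm_pos_iff.mpr hf
  positivity

lemma continuous_hypPhi (e : V) (x : ℝ) : Continuous (hypPhi e x) := by
  apply Continuous.quotient_lift
  have h1 : Continuous fun p : {f : V →L[ℝ] ℝ // f ≠ 0} × ℝ => (p.1.1 : V →L[ℝ] ℝ) e :=
    (continuous_eval_const e).comp (continuous_subtype_val.comp continuous_fst)
  have h2 : Continuous fun p : {f : V →L[ℝ] ℝ // f ≠ 0} × ℝ => ‖(p.1.1 : V →L[ℝ] ℝ)‖ :=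
    continuous_norm.comp (continuous_subtype_val.comp continuous_fst)
  exact ((continuous_snd.mul h1).sub (continuous_const.mul (h1.pow 2))).div
    ((h2.pow 2).add (continuous_snd.pow 2)) fun p => (hypDen_pos p.1.1 p.1.2 p.2).ne'

lemma hypSet_eq (e : V) (x : ℝ) :
    {h : HypSpace V | ∃ (f : V →L[ℝ] ℝ) (hf : f ≠ 0) (y : ℝ),
        h = hypMk f hf y ∧ x * (f e) ^ 2 ≤ y * f e} = {h | 0 ≤ hypPhi e x h} := by
  ext h
  constructor
  · rintro ⟨f, hf, y, rfl, hle⟩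
    have heq : hypPhi e x (hypMk f hf y)
        = (y * f e - x * (f e) ^ 2) / (‖f‖ ^ 2 + y ^ 2) := rfl
    rw [Set.mem_setOf_eq, heq]
    have := hypDen_pos f hf y
    exact div_nonneg (by linarith) (by linarith)
  · intro h0
    obtain ⟨⟨⟨f, hf⟩, y⟩, rfl⟩ := Quotient.exists_rep h
    refine ⟨f, hf, y, rfl, ?_⟩
    have hd : 0 < ‖f‖ ^ 2 + y ^ 2 := hypDen_pos f hf y
    have h0' : (0 : ℝ) ≤ (y * f e - x * (f e) ^ 2) / (‖f‖ ^ 2 + y ^ 2) := h0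
    have := (le_div_iff₀ hd).mp h0'
    nlinarith

lemma hypPhi_le (e e' : V) (x x' r : ℝ) (he : ‖e‖ = 1) (he' : ‖e'‖ = 1)
    (h1 : ‖e' - e‖ ≤ r) (h2 : |x' - x| ≤ r) (h : HypSpace V) :
    hypPhi e' x' h ≤ hypPhi e x h + r * (2 + 2 * |x|) := by
  induction h using Quotient.ind with
  | _ p =>
  obtain ⟨⟨f, hf⟩, y⟩ := p
  show (y * f e' - x' * (f e') ^ 2) / (‖f‖ ^ 2 + y ^ 2)
      ≤ (y * f e - x * (f e) ^ 2) / (‖f‖ ^ 2 + y ^ 2) + r * (2 + 2 * |x|)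
  have hr : 0 ≤ r := le_trans (abs_nonneg _) h2
  set a := f e with ha
  set b := f e' with hb
  set n := ‖f‖ with hn
  have hnpos : 0 < n := norm_pos_iff.mpr hf
  have hD : 0 < n ^ 2 + y ^ 2 := by positivity
  have hab : |b - a| ≤ n * r := by
    have hba : b - a = f (e' - e) := by rw [map_sub]
    rw [hba]
    calc |f (e' - e)| ≤ ‖f‖ * ‖e' - e‖ := f.le_opNorm _
      _ ≤ n * r := by rw [← hn]; gcongr
  have hA : |a| ≤ n := by
    calc |a| ≤ ‖f‖ * ‖e‖ := f.le_opNorm e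
      _ = n := by rw [he, mul_one]
  have hB : |b| ≤ n := by
    calc |b| ≤ ‖f‖ * ‖e'‖ := f.le_opNorm e'
      _ = n := by rw [he', mul_one]
  have key : y * b - x' * b ^ 2
      ≤ (y * a - x * a ^ 2) + r * (2 + 2 * |x|) * (n ^ 2 + y ^ 2) := by
    have e1 : y * (b - a) ≤ |y| * (n * r) := by
      calc y * (b - a) ≤ |y * (b - a)| := le_abs_self _
        _ = |y| * |b - a| := abs_mul _ _
        _ ≤ |y| * (n * r) := by gcongr
    have e2 : |y| * n ≤ (n ^ 2 + y ^ 2) / 2 := by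
      nlinarith [sq_abs y, sq_nonneg (|y| - n), abs_nonneg y]
    have e3 : x * (a ^ 2 - b ^ 2) ≤ |x| * (2 * n * (n * r)) := by
      have habs : |a ^ 2 - b ^ 2| ≤ 2 * n * (n * r) := by
        have hfac : a ^ 2 - b ^ 2 = (a + b) * (a - b) := by ring
        rw [hfac, abs_mul]
        have hsum : |a + b| ≤ 2 * n := by
          calc |a + b| ≤ |a| + |b| := abs_add_le _ _
            _ ≤ 2 * n := by linarith
        have hdiff : |a - b| ≤ n * r := by rw [abs_sub_comm]; exact hab
        exact mul_le_mul hsum hdiff (abs_nonneg _) (by positivity)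
      calc x * (a ^ 2 - b ^ 2) ≤ |x * (a ^ 2 - b ^ 2)| := le_abs_self _
        _ = |x| * |a ^ 2 - b ^ 2| := abs_mul _ _
        _ ≤ |x| * (2 * n * (n * r)) := by gcongr
    have e4 : (x - x') * b ^ 2 ≤ r * n ^ 2 := by
      have hb2 : b ^ 2 ≤ n ^ 2 := by nlinarith [abs_nonneg b, sq_abs b]
      have habs : |x - x'| ≤ r := by rw [abs_sub_comm]; exact h2
      calc (x - x') * b ^ 2 ≤ |x - x'| * b ^ 2 :=
            mul_le_mul_of_nonneg_right (le_abs_self _) (sq_nonneg b)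
        _ ≤ r * n ^ 2 := mul_le_mul habs hb2 (sq_nonneg b) hr
    have e2' : |y| * n * r ≤ (n ^ 2 + y ^ 2) / 2 * r := mul_le_mul_of_nonneg_right e2 hr
    have e5 : |x| * (2 * n * (n * r)) ≤ 2 * (|x| * r) * (n ^ 2 + y ^ 2) := by
      nlinarith [mul_nonneg (abs_nonneg x) hr, sq_nonneg y]
    have e6 : r * n ^ 2 ≤ r * (n ^ 2 + y ^ 2) := by
      nlinarith [mul_nonneg hr (sq_nonneg y)]
    have e7 : 0 ≤ r * (n ^ 2 + y ^ 2) := mul_nonneg hr hD.le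
    linarith [e1, e2', e3, e4, e5, e6, e7]
  calc (y * b - x' * b ^ 2) / (n ^ 2 + y ^ 2)
      ≤ ((y * a - x * a ^ 2) + r * (2 + 2 * |x|) * (n ^ 2 + y ^ 2)) / (n ^ 2 + y ^ 2) := by
        gcongr
    _ = (y * a - x * a ^ 2) / (n ^ 2 + y ^ 2) + r * (2 + 2 * |x|) := by
        rw [add_div, mul_div_cancel_right₀ _ hD.ne']

end HypPhiAux

/-- **Continuity lemma.** Let `μ` be a Borel probability measure on the space `H*` of
affine hyperplanes in the Euclidean vector space `V` of dimension `m + 1`.  If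
`(e, x) ∈ S(V) × ℝ` satisfies `μ {[f, y] : y * f e ≥ x * (f e)^2} = 1/2 - 3δ` with
`δ > 0`, then there is an open neighbourhood `N` of `(e, x)` (in `S(V) × ℝ`, given here
as the trace on `S(V) × ℝ` of an open subset of `V × ℝ`) such that
`μ {[f, y] : y * f e' ≥ x' * (f e')^2} < 1/2 - δ` for all `(e', x') ∈ N`. -/
theorem measure_halfspace_continuity {V : Type*} [NormedAddCommGroup V]
    [InnerProductSpace ℝ V] (m : ℕ) (hdim : Module.finrank ℝ V = m + 1)
    (μ : Measure (HypSpace V)) [IsProbabilityMeasure μ]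
    (e : V) (he : ‖e‖ = 1) (x δ : ℝ) (hδ : 0 < δ)
    (hμ : (μ {h : HypSpace V | ∃ (f : V →L[ℝ] ℝ) (hf : f ≠ 0) (y : ℝ),
        h = hypMk f hf y ∧ x * (f e) ^ 2 ≤ y * f e}).toReal = 1 / 2 - 3 * δ) :
    ∃ N : Set (V × ℝ), IsOpen N ∧ (e, x) ∈ N ∧
      ∀ e' x', (e', x') ∈ N → ‖e'‖ = 1 →
        (μ {h : HypSpace V | ∃ (f : V →L[ℝ] ℝ) (hf : f ≠ 0) (y : ℝ),
            h = hypMk f hf y ∧ x' * (f e') ^ 2 ≤ y * f e'}).toReal < 1 / 2 - δ := by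
  have hSeq := hypSet_eq (V := V) e x
  -- the measure of the base set, as an extended nonneg real
  have hμ' : μ {h : HypSpace V | 0 ≤ hypPhi e x h} = ENNReal.ofReal (1 / 2 - 3 * δ) := by
    rw [← hSeq, ← hμ, ENNReal.ofReal_toReal (measure_ne_top μ _)]
  have h3δ : 0 ≤ 1 / 2 - 3 * δ := by rw [← hμ]; exact ENNReal.toReal_nonneg
  -- the decreasing approximating sets
  set C : ℕ → Set (HypSpace V) := fun nn => {h | -(1 / (nn + 1)) ≤ hypPhi e x h} with hC
  have hCmeas : ∀ nn, MeasurableSet (C nn) := fun nn =>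
    (isClosed_le continuous_const (continuous_hypPhi e x)).measurableSet
  have hCanti : Antitone C := by
    intro i j hij h hh
    simp only [hC, Set.mem_setOf_eq] at hh ⊢
    have hij' : (1 : ℝ) / (j + 1) ≤ 1 / (i + 1) := by
      apply one_div_le_one_div_of_le (by positivity)
      have : (i : ℝ) ≤ j := Nat.cast_le.mpr hij
      linarith
    linarith
  have hCint : ⋂ nn, C nn = {h : HypSpace V | 0 ≤ hypPhi e x h} := by
    ext h
    simp only [Set.mem_iInter, Set.mem_setOf_eq, hC]
    constructor
    · intro hh
      by_contra hneg
      push_neg at hneg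
      obtain ⟨nn, hnn⟩ := exists_nat_one_div_lt (show (0:ℝ) < -(hypPhi e x h) by linarith)
      have := hh nn
      linarith
    · intro hh nn
      have : (0:ℝ) < 1 / (nn + 1) := by positivity
      linarith
  have htend : Filter.Tendsto (fun nn => μ (C nn)) Filter.atTop
      (nhds (μ {h : HypSpace V | 0 ≤ hypPhi e x h})) := by
    rw [← hCint]
    exact tendsto_measure_iInter_atTop (fun nn => (hCmeas nn).nullMeasurableSet) hCanti
      ⟨0, measure_ne_top μ _⟩
  have hlt : μ {h : HypSpace V | 0 ≤ hypPhi e x h} < ENNReal.ofReal (1 / 2 - δ) := by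
    rw [hμ']
    exact (ENNReal.ofReal_lt_ofReal_iff (by linarith)).mpr (by linarith)
  obtain ⟨nn, hnn⟩ := (htend.eventually_lt_const hlt).exists
  -- choose the radius
  set ε : ℝ := 1 / (nn + 1) with hε
  have hεpos : 0 < ε := by positivity
  have hden : (0:ℝ) < 2 + 2 * |x| := by positivity
  set r : ℝ := ε / (2 + 2 * |x|) with hr
  have hrpos : 0 < r := div_pos hεpos hden
  have hrε : r * (2 + 2 * |x|) = ε := div_mul_cancel₀ _ hden.ne'
  refine ⟨Metric.ball e r ×ˢ Metric.ball x r,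
    (Metric.isOpen_ball).prod Metric.isOpen_ball,
    ⟨Metric.mem_ball_self hrpos, Metric.mem_ball_self hrpos⟩, ?_⟩
  intro e' x' hmem hnorm
  obtain ⟨hmem1, hmem2⟩ := hmem
  have hee' : ‖e' - e‖ ≤ r := by
    rw [← dist_eq_norm]; exact (Metric.mem_ball.mp hmem1).le
  have hxx' : |x' - x| ≤ r := by
    rw [← Real.dist_eq]; exact (Metric.mem_ball.mp hmem2).le
  have hsub : {h : HypSpace V | ∃ (f : V →L[ℝ] ℝ) (hf : f ≠ 0) (y : ℝ),
      h = hypMk f hf y ∧ x' * (f e') ^ 2 ≤ y * f e'} ⊆ C nn := by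
    rw [hypSet_eq e' x']
    intro h hh
    have hest := hypPhi_le e e' x x' r he hnorm hee' hxx' h
    have hh' : 0 ≤ hypPhi e' x' h := hh
    simp only [hC, Set.mem_setOf_eq, hε]
    rw [hrε] at hest
    linarith
  have hfin : μ {h : HypSpace V | ∃ (f : V →L[ℝ] ℝ) (hf : f ≠ 0) (y : ℝ),
      h = hypMk f hf y ∧ x' * (f e') ^ 2 ≤ y * f e'} < ENNReal.ofReal (1 / 2 - δ) :=
    lt_of_le_of_lt (measure_mono hsub) hnn
  have := (ENNReal.toReal_lt_toReal (measure_ne_top μ _) ENNReal.ofReal_ne_top).mpr hfin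
  rwa [ENNReal.toReal_ofReal (by linarith : (0:ℝ) ≤ 1 / 2 - δ)] at this
end

section
/- Let V be a real vector space of dimension m+1 with basis e_0, …, e_m and dual basis f_0, …, f_m. Set H_j = {v ∈ V : f_j(v) = 1} for j = 0, …, m, and H' = {v ∈ V : f_0(v) + ⋯ + f_m(v) = 0}. Then there is no pair (L,v), with L a line through the origin in V and v ∈ L, such that each of the two closed rays in L starting at v meets or is parallel to every one of the m+2 hyperplanes H_0, …, H_m, H'. (Hence the restriction l ≤ m in the hyperplane Ham Sandwich theorem is optimal.) -/
/-- The closed ray `{v + t • w : t ≥ 0}` in the line `v + ℝw`. -/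
def ray {V : Type*} [AddCommGroup V] [Module ℝ V] (v w : V) : Set V :=
  {p | ∃ t : ℝ, 0 ≤ t ∧ p = v + t • w}

/-- A subset `H` of `V` (thought of as an affine hyperplane) is parallel to the line
`L = ℝw` if it is invariant under translation by every element of `L`.  For a hyperplane
`H = {v | f v = y}` this says exactly that `f` vanishes on `L`. -/
def IsParallelTo {V : Type*} [AddCommGroup V] [Module ℝ V] (H : Set V) (w : V) : Prop :=
  ∀ a ∈ H, ∀ t : ℝ, a + t • w ∈ H

/-- Each of the two closed rays in the line `L = ℝw` starting at `v ∈ L` meets `H` or is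
parallel to `L`. -/
def RaysMeetOrParallel {V : Type*} [AddCommGroup V] [Module ℝ V]
    (H : Set V) (v w : V) : Prop :=
  ((H ∩ ray v w).Nonempty ∨ IsParallelTo H w) ∧
  ((H ∩ ray v (-w)).Nonempty ∨ IsParallelTo H w)

/-- If `f w ≠ 0` and both rays from `v` meet or are parallel to `{f = y}`, then `f v = y`. -/
lemma key_lemma {V : Type*} [AddCommGroup V] [Module ℝ V] (f : V →ₗ[ℝ] ℝ) (y : ℝ) (v w : V)
    (hw : f w ≠ 0) (h : RaysMeetOrParallel {u : V | f u = y} v w) : f v = y := by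
  have hpar : ¬ IsParallelTo {u : V | f u = y} w := by
    intro hp
    have ha : ((y / f w) • w) ∈ {u : V | f u = y} := by
      simp [div_mul_cancel₀, hw]
    have h1 := hp _ ha 1
    simp only [Set.mem_setOf_eq, map_add, map_smul, one_smul, smul_eq_mul] at ha h1
    rw [ha] at h1
    exact hw (by linarith)
  obtain ⟨hpos, hneg⟩ := h
  obtain ⟨p, hp1, t, ht, hpt⟩ := hpos.resolve_right hpar
  obtain ⟨q, hq1, s, hs, hqs⟩ := hneg.resolve_right hpar
  simp only [Set.mem_setOf_eq] at hp1 hq1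
  rw [hpt] at hp1
  rw [hqs] at hq1
  simp only [map_add, map_smul, map_neg, smul_eq_mul, mul_neg] at hp1 hq1
  have hsum : (t + s) * f w = 0 := by ring_nf; linarith
  have : t + s = 0 := by
    rcases mul_eq_zero.mp hsum with h | h
    · exact h
    · exact absurd h hw
  have ht0 : t = 0 := by linarith
  rw [ht0] at hp1; simpa using hp1

/-- **Optimality of `l ≤ m`.**  Let `V` have basis `e_0, …, e_m` with dual basis
`f_0, …, f_m`.  Set `H_j = {v | f_j v = 1}` and `H' = {v | f_0 v + ⋯ + f_m v = 0}`.
Then there is no pair `(L, v)`, with `L = ℝw` a line through the origin and `v ∈ L`,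
such that each of the two closed rays in `L` starting at `v` meets or is parallel to
every one of the `m + 2` hyperplanes `H_0, …, H_m, H'`. -/
theorem no_solution_for_m_plus_two_hyperplanes {V : Type*} [AddCommGroup V] [Module ℝ V]
    (m : ℕ) (b : Module.Basis (Fin (m + 1)) ℝ V) :
    ¬ ∃ (w v : V), w ≠ 0 ∧ (∃ t : ℝ, v = t • w) ∧
        (∀ j : Fin (m + 1), RaysMeetOrParallel {u : V | b.coord j u = 1} v w) ∧
        RaysMeetOrParallel {u : V | (∑ j : Fin (m + 1), b.coord j u) = 0} v w := by
  rintro ⟨w, v, hw, ⟨s, hv⟩, hH, hH'⟩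
  set F : V →ₗ[ℝ] ℝ := ∑ j : Fin (m + 1), b.coord j with hF
  have hFapp : ∀ u : V, F u = ∑ j : Fin (m + 1), b.coord j u := by
    intro u; rw [hF]; simp [LinearMap.sum_apply]
  -- some coordinate of w is nonzero
  have hex : ∃ j, b.coord j w ≠ 0 := by
    by_contra h
    push_neg at h
    exact hw (b.forall_coord_eq_zero_iff.mp h)
  obtain ⟨j0, hj0⟩ := hex
  have hvj0 : b.coord j0 v = 1 := key_lemma _ 1 v w hj0 (hH j0)
  have hs : s * b.coord j0 w = 1 := by
    rw [hv] at hvj0; simpa using hvj0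
  have hs0 : s ≠ 0 := by
    intro h; rw [h] at hs; simp at hs
  -- F w = 0
  have hFw : F w = 0 := by
    by_contra hFw
    have hFv : F v = 0 := by
      have := key_lemma F 0 v w hFw ?_
      · exact this
      · convert hH' using 2
        ext u; simp [hFapp]
    rw [hv, map_smul, smul_eq_mul] at hFv
    rcases mul_eq_zero.mp hFv with h | h
    · exact hs0 h
    · exact hFw h
  -- each s * c j ∈ {0,1}, nonneg, sum is 0, but term j0 is 1
  have hterm : ∀ j, s * b.coord j w = 0 ∨ s * b.coord j w = 1 := by
    intro j
    rcases eq_or_ne (b.coord j w) 0 with h | h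
    · left; rw [h, mul_zero]
    · right
      have := key_lemma _ 1 v w h (hH j)
      rw [hv] at this; simpa using this
  have hsum0 : ∑ j : Fin (m + 1), s * b.coord j w = 0 := by
    rw [← Finset.mul_sum, ← hFapp, hFw, mul_zero]
  have hnonneg : ∀ j ∈ Finset.univ, (0:ℝ) ≤ s * b.coord j w := by
    intro j _
    rcases hterm j with h | h <;> rw [h] <;> norm_num
  have := (Finset.sum_eq_zero_iff_of_nonneg hnonneg).mp hsum0 j0 (Finset.mem_univ j0)
  rw [this] at hs
  norm_num at hs
end

section
/- Let V be a Euclidean vector space of dimension m+1 and let μ be a Borel probability measure on the space H* of affine hyperplanes in V. Suppose (e_n)_{n≥1} is a sequence in the unit sphere S(V) converging to e ∈ S(V) such that μ{[f,y] ∈ H* : ‖f‖ = 1 and |f(e_n)| ≤ |y|/n} ≥ 1/2 for every n ≥ 1. Then μ{[f,y] ∈ H* : f(e) = 0} ≥ 1/2; consequently, for every x ∈ ℝ the point [e,x] ∈ H satisfies μ{[f,y] ∈ H* : y·f(e) ≥ x·f(e)²} ≥ 1/2 and μ{[f,y] ∈ H* : y·f(e) ≤ x·f(e)²} ≥ 1/2.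 -/
open MeasureTheory ENNReal

section Aux

variable {V : Type*} [NormedAddCommGroup V] [NormedSpace ℝ V]

instance (V : Type*) [NormedAddCommGroup V] [NormedSpace ℝ V] :
    BorelSpace (HypSpace V) := ⟨rfl⟩

lemma hyp_isQuotientMap :
    Topology.IsQuotientMap (Quotient.mk (hypSetoid V)) :=
  isQuotientMap_quot_mk

lemma hyp_preimage_seq (v : V) (c : ℝ) :
    (Quotient.mk (hypSetoid V)) ⁻¹' {h : HypSpace V | ∃ (f : V →L[ℝ] ℝ) (hf : f ≠ 0) (y : ℝ),
        h = hypMk f hf y ∧ ‖f‖ = 1 ∧ |f v| ≤ |y| / c} =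
    {p : {f : V →L[ℝ] ℝ // f ≠ 0} × ℝ | |(p.1 : V →L[ℝ] ℝ) v| ≤ |p.2| / c} := by
  ext ⟨⟨g, hg⟩, z⟩
  simp only [Set.mem_preimage, Set.mem_setOf_eq]
  constructor
  · rintro ⟨f, hf, y, hq, hnorm, hle⟩
    obtain ⟨t, ht, h1, h2⟩ := Quotient.exact hq
    simp only at h1 h2
    rw [h1, h2] at hle
    have habs : |t| > 0 := abs_pos.mpr ht
    rw [ContinuousLinearMap.smul_apply, smul_eq_mul, abs_mul, abs_mul, mul_div_assoc] at hle
    exact le_of_mul_le_mul_left hle habs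
  · intro hle
    have hgn : ‖g‖ ≠ 0 := norm_ne_zero_iff.mpr hg
    have hgpos : (0 : ℝ) < ‖g‖ := norm_pos_iff.mpr hg
    have htne : ‖g‖⁻¹ ≠ 0 := inv_ne_zero hgn
    have hsne : ‖g‖⁻¹ • g ≠ 0 := by
      intro h0
      apply hg
      have h1 := congrArg (fun f : V →L[ℝ] ℝ => ‖g‖ • f) h0
      simpa [smul_smul, mul_inv_cancel₀ hgn] using h1
    refine ⟨‖g‖⁻¹ • g, hsne, ‖g‖⁻¹ * z,
      Quotient.sound ⟨‖g‖⁻¹, htne, rfl, rfl⟩, ?_, ?_⟩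
    · rw [norm_smul ‖g‖⁻¹ g, norm_inv, norm_norm, inv_mul_cancel₀ hgn]
    · rw [ContinuousLinearMap.smul_apply, smul_eq_mul, abs_mul, abs_mul, mul_div_assoc]
      have : |‖g‖⁻¹| > 0 := abs_pos.mpr htne
      exact mul_le_mul_of_nonneg_left hle this.le

lemma hyp_preimage_zero (v : V) :
    (Quotient.mk (hypSetoid V)) ⁻¹' {h : HypSpace V | ∃ (f : V →L[ℝ] ℝ) (hf : f ≠ 0) (y : ℝ),
        h = hypMk f hf y ∧ f v = 0} =
    {p : {f : V →L[ℝ] ℝ // f ≠ 0} × ℝ | (p.1 : V →L[ℝ] ℝ) v = 0} := by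
  ext ⟨⟨g, hg⟩, z⟩
  simp only [Set.mem_preimage, Set.mem_setOf_eq]
  constructor
  · rintro ⟨f, hf, y, hq, hzero⟩
    obtain ⟨t, ht, h1, h2⟩ := Quotient.exact hq
    simp only at h1
    rw [h1, ContinuousLinearMap.smul_apply, smul_eq_mul, mul_eq_zero] at hzero
    exact hzero.resolve_left ht
  · intro hzero
    exact ⟨g, hg, z, rfl, hzero⟩

lemma hyp_eval_continuous (v : V) :
    Continuous fun p : {f : V →L[ℝ] ℝ // f ≠ 0} × ℝ => (p.1 : V →L[ℝ] ℝ) v :=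
  (ContinuousLinearMap.apply ℝ ℝ v).continuous.comp
    (continuous_subtype_val.comp continuous_fst)

lemma hyp_seq_isClosed (v : V) (c : ℝ) :
    IsClosed {h : HypSpace V | ∃ (f : V →L[ℝ] ℝ) (hf : f ≠ 0) (y : ℝ),
        h = hypMk f hf y ∧ ‖f‖ = 1 ∧ |f v| ≤ |y| / c} := by
  refine (hyp_isQuotientMap (V := V)).isClosed_preimage.mp ?_
  refine (congrArg IsClosed (hyp_preimage_seq v c)).mpr ?_
  exact isClosed_le ((hyp_eval_continuous v).abs)
    ((continuous_snd.abs).div_const c)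

lemma hyp_zero_isClosed (v : V) :
    IsClosed {h : HypSpace V | ∃ (f : V →L[ℝ] ℝ) (hf : f ≠ 0) (y : ℝ),
        h = hypMk f hf y ∧ f v = 0} := by
  refine (hyp_isQuotientMap (V := V)).isClosed_preimage.mp ?_
  refine (congrArg IsClosed (hyp_preimage_zero v)).mpr ?_
  exact isClosed_eq (hyp_eval_continuous v) continuous_const

end Aux

/-- The `n`-th "bad" event. -/
def hypSeqSet {V : Type*} [NormedAddCommGroup V] [NormedSpace ℝ V]
    (e : ℕ → V) (n : ℕ) : Set (HypSpace V) :=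
  {h : HypSpace V | ∃ (f : V →L[ℝ] ℝ) (hf : f ≠ 0) (y : ℝ),
      h = hypMk f hf y ∧ ‖f‖ = 1 ∧ |f (e n)| ≤ |y| / n}

/-- **Degenerate case lemma.** Let `μ` be a Borel probability measure on the space `H*`
of affine hyperplanes in the Euclidean vector space `V` of dimension `m + 1`.  If
`(e_n)_{n ≥ 1}` is a sequence in the unit sphere `S(V)` converging to `e ∈ S(V)` with
`μ {[f, y] : ‖f‖ = 1, |f e_n| ≤ |y| / n} ≥ 1/2` for all `n ≥ 1`, then
`μ {[f, y] : f e = 0} ≥ 1/2`; consequently, for every `x : ℝ` the point `[e, x] ∈ H`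
satisfies `μ {[f, y] : y * f e ≥ x * (f e)^2} ≥ 1/2` and
`μ {[f, y] : y * f e ≤ x * (f e)^2} ≥ 1/2`. -/
theorem degenerate_case {V : Type*} [NormedAddCommGroup V] [InnerProductSpace ℝ V]
    (m : ℕ) (hdim : Module.finrank ℝ V = m + 1)
    (μ : Measure (HypSpace V)) [IsProbabilityMeasure μ]
    (e : ℕ → V) (he : ∀ n, ‖e n‖ = 1)
    (e₀ : V) (he₀ : ‖e₀‖ = 1) (hconv : Filter.Tendsto e Filter.atTop (nhds e₀))
    (hseq : ∀ n : ℕ, 1 ≤ n →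
      (1 : ℝ≥0∞) / 2 ≤ μ {h : HypSpace V | ∃ (f : V →L[ℝ] ℝ) (hf : f ≠ 0) (y : ℝ),
          h = hypMk f hf y ∧ ‖f‖ = 1 ∧ |f (e n)| ≤ |y| / n}) :
    (1 : ℝ≥0∞) / 2 ≤ μ {h : HypSpace V | ∃ (f : V →L[ℝ] ℝ) (hf : f ≠ 0) (y : ℝ),
        h = hypMk f hf y ∧ f e₀ = 0} ∧
    ∀ x : ℝ,
      (1 : ℝ≥0∞) / 2 ≤ μ {h : HypSpace V | ∃ (f : V →L[ℝ] ℝ) (hf : f ≠ 0) (y : ℝ),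
          h = hypMk f hf y ∧ x * (f e₀) ^ 2 ≤ y * f e₀} ∧
      (1 : ℝ≥0∞) / 2 ≤ μ {h : HypSpace V | ∃ (f : V →L[ℝ] ℝ) (hf : f ≠ 0) (y : ℝ),
          h = hypMk f hf y ∧ y * f e₀ ≤ x * (f e₀) ^ 2} := by
  classical
  have hmain : (1 : ℝ≥0∞) / 2 ≤ μ {h : HypSpace V |
      ∃ (f : V →L[ℝ] ℝ) (hf : f ≠ 0) (y : ℝ), h = hypMk f hf y ∧ f e₀ = 0} := by
    have hseq' : ∀ n : ℕ, 1 ≤ n → (1 : ℝ≥0∞) / 2 ≤ μ (hypSeqSet e n) := hseq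
    set C : ℕ → Set (HypSpace V) := fun N => ⋃ n ∈ Set.Ici (N + 1), hypSeqSet e n with hC
    have hCmeas : ∀ N, MeasureTheory.NullMeasurableSet (C N) μ := by
      intro N
      refine (MeasurableSet.biUnion (Set.to_countable _) ?_).nullMeasurableSet
      intro n _
      exact (hyp_seq_isClosed (e n) n).measurableSet
    have hCanti : Antitone C := by
      intro N M hNM
      refine Set.biUnion_subset_biUnion_left ?_
      intro n hn
      simp only [Set.mem_Ici] at hn ⊢
      omega
    have hle : ∀ N, (1 : ℝ≥0∞) / 2 ≤ μ (C N) := by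
      intro N
      refine le_trans (hseq' (N + 1) (by omega)) (measure_mono ?_)
      exact Set.subset_biUnion_of_mem (by simp)
    have htend := MeasureTheory.tendsto_measure_iInter_atTop hCmeas hCanti
      ⟨0, measure_ne_top μ _⟩
    have hint : (1 : ℝ≥0∞) / 2 ≤ μ (⋂ N, C N) := ge_of_tendsto' htend hle
    refine le_trans hint (measure_mono ?_)
    intro h
    induction h using Quotient.inductionOn with
    | h p =>
      obtain ⟨⟨g, hg⟩, z⟩ := p
      intro hh
      have key : ∀ N : ℕ, ∃ n, N + 1 ≤ n ∧ |g (e n)| ≤ |z| / n := by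
        intro N
        have hmem := Set.mem_iInter.mp hh N
        simp only [hC, Set.mem_iUnion, Set.mem_Ici] at hmem
        have hmem := Set.mem_iUnion₂.mp hmem
        obtain ⟨n, hn, hmem⟩ := hmem
        have hp : (⟨⟨g, hg⟩, z⟩ : {f : V →L[ℝ] ℝ // f ≠ 0} × ℝ) ∈
            (Quotient.mk (hypSetoid V)) ⁻¹' (hypSeqSet e n) := hmem
        rw [hypSeqSet] at hp
        have hp := (Set.ext_iff.mp (hyp_preimage_seq (e n) (n : ℝ)) _).mp hp
        exact ⟨n, hn, hp⟩
      have hge0 : g e₀ = 0 := by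
        by_contra hne
        have hε : (0 : ℝ) < |g e₀| / 2 := by positivity
        have ht1 : Filter.Tendsto (fun n => g (e n)) Filter.atTop (nhds (g e₀)) :=
          (g.continuous.tendsto e₀).comp hconv
        obtain ⟨N₁, hN₁⟩ := Metric.tendsto_atTop.mp ht1 (|g e₀| / 2) hε
        obtain ⟨N₂, hN₂⟩ := Filter.eventually_atTop.mp
          ((tendsto_const_div_atTop_nhds_zero_nat |z|).eventually (gt_mem_nhds hε))
        obtain ⟨n, hn, hbound⟩ := key (max N₁ N₂)
        have h1 := hN₁ n (le_trans (le_max_left N₁ N₂) (by omega))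
        have h2 := hN₂ n (le_trans (le_max_right N₁ N₂) (by omega))
        rw [Real.dist_eq] at h1
        have habs : |g e₀| - |g (e n)| ≤ |g (e n) - g e₀| := by
          have h3 := abs_sub_abs_le_abs_sub (g e₀) (g (e n))
          rwa [abs_sub_comm] at h3
        linarith
      exact ⟨g, hg, z, rfl, hge0⟩
  refine ⟨hmain, fun x => ⟨?_, ?_⟩⟩
  · refine le_trans hmain (measure_mono ?_)
    rintro h ⟨f, hf, y, hq, hz⟩
    exact ⟨f, hf, y, hq, by simp [hz]⟩
  · refine le_trans hmain (measure_mono ?_)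
    rintro h ⟨f, hf, y, hq, hz⟩
    exact ⟨f, hf, y, hq, by simp [hz]⟩
end
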